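/- arXiv:1106.2090 — 4 statements merged into one kernel-verified Lean document; each statement's English description precedes it below -/
import Mathlib

section
/- Let (X,d) be a metric space, f: X → ℝ a function, and for t>0 define the Hopf-Lax function Q_t f(x) = inf_{y∈X} (f(y) + d(x,y)²/(2t)). Then for 0 < t < s, Q_s f(x) - Q_t f(x) ≤ (D⁺(x,t))²/2 · (1/s - 1/t), where D⁺(x,t) is the supremum over minimizing sequences (y_n) of F(t,x,·) of limsup_n d(x,y_n). -/
open Filter Topology

/-- `F(t,x,y) = f(y) + d(x,y)²/(2t)`. -/
noncomputable def hopfLaxF {X : Type*} [MetricSpace X] (f : X → ℝ) (t : ℝ) (x y : X) : ℝ :=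
  f y + dist x y ^ 2 / (2 * t)

/-- `(y n)` is a minimizing sequence for `F(t,x,·)`, whose infimum value is `Q`. -/
def IsMinimizingSeq {X : Type*} [MetricSpace X] (f : X → ℝ) (t : ℝ) (x : X) (Q : ℝ)
    (y : ℕ → X) : Prop :=
  Tendsto (fun n => hopfLaxF f t x (y n)) atTop (𝓝 Q)

/-- If `Q t x = inf_y F(t,x,y)` (a real number, i.e. `t` is below `t_*(x)`) and
`D⁺(x,t)` is the supremum over minimizing sequences of `limsup_n d(x,y_n)`, then
for `0 < t < s` we have `Q_s f(x) - Q_t f(x) ≤ D⁺(x,t)²/2 · (1/s - 1/t)`. -/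
theorem hopfLax_time_difference_bound {X : Type*} [MetricSpace X] (f : X → ℝ)
    (Q : ℝ → X → ℝ) (x : X) (t s : ℝ) (ht : 0 < t) (hts : t < s)
    (hQt : IsGLB (Set.range (hopfLaxF f t x)) (Q t x))
    (hQs : IsGLB (Set.range (hopfLaxF f s x)) (Q s x))
    (Dp : ℝ)
    (hDp : IsLUB {L : ℝ | ∃ y : ℕ → X, IsMinimizingSeq f t x (Q t x) y ∧
      L = atTop.limsup fun n => dist x (y n)} Dp) :
    Q s x - Q t x ≤ Dp ^ 2 / 2 * (1 / s - 1 / t) := by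
  have hs : 0 < s := ht.trans hts
  set c : ℝ := 1 / (2 * t) - 1 / (2 * s) with hc
  have hcpos : 0 < c := by
    rw [hc, sub_pos]
    apply one_div_lt_one_div_of_lt <;> nlinarith
  -- Q s x ≤ Q t x
  have hQle : Q s x ≤ Q t x := by
    apply hQt.2
    rintro z ⟨y, rfl⟩
    have h1 : Q s x ≤ hopfLaxF f s x y := hQs.1 ⟨y, rfl⟩
    have h2 : hopfLaxF f s x y ≤ hopfLaxF f t x y := by
      unfold hopfLaxF
      have : dist x y ^ 2 / (2 * s) ≤ dist x y ^ 2 / (2 * t) :=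
        div_le_div_of_nonneg_left (sq_nonneg _) (by linarith) (by linarith)
      linarith
    linarith
  set A : ℝ := (Q t x - Q s x) / c with hA
  have hA0 : 0 ≤ A := div_nonneg (by linarith) hcpos.le
  set B : ℝ := Real.sqrt A with hB
  -- every minimizing sequence has nonnegative limsup which is ≤ B
  have key : ∀ y : ℕ → X, IsMinimizingSeq f t x (Q t x) y →
      (atTop.limsup fun n => dist x (y n)) ≤ B ∧
        0 ≤ atTop.limsup fun n => dist x (y n) := by
    intro y hy
    have hptw : ∀ n, dist x (y n) ≤ Real.sqrt ((hopfLaxF f t x (y n) - Q s x) / c) := by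
      intro n
      have h1 : Q s x ≤ hopfLaxF f s x (y n) := hQs.1 ⟨y n, rfl⟩
      have h2 : dist x (y n) ^ 2 * c ≤ hopfLaxF f t x (y n) - Q s x := by
        simp only [hopfLaxF, hc] at h1 ⊢
        have e1 : dist x (y n) ^ 2 * (1 / (2 * t) - 1 / (2 * s))
            = dist x (y n) ^ 2 / (2 * t) - dist x (y n) ^ 2 / (2 * s) := by
          field_simp
        linarith [e1]
      have := Real.sqrt_le_sqrt ((le_div_iff₀ hcpos).2 h2)
      rwa [Real.sqrt_sq dist_nonneg] at this
    have hg : Tendsto (fun n => Real.sqrt ((hopfLaxF f t x (y n) - Q s x) / c)) atTop (𝓝 B) := by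
      rw [hB, hA]
      exact (Real.continuous_sqrt.tendsto _).comp ((hy.sub_const _).div_const _)
    have hgbdd : IsBoundedUnder (· ≤ ·) atTop
        (fun n => Real.sqrt ((hopfLaxF f t x (y n) - Q s x) / c)) := hg.isBoundedUnder_le
    have hbdd : IsBoundedUnder (· ≤ ·) atTop fun n => dist x (y n) :=
      hgbdd.mono_le (Eventually.of_forall hptw)
    refine ⟨?_, ?_⟩
    · calc atTop.limsup (fun n => dist x (y n))
          ≤ atTop.limsup (fun n => Real.sqrt ((hopfLaxF f t x (y n) - Q s x) / c)) :=
            limsup_le_limsup (Eventually.of_forall hptw)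
              (isCoboundedUnder_le_of_le atTop fun n => dist_nonneg) hgbdd
        _ = B := hg.limsup_eq
    · exact le_limsup_of_frequently_le (Frequently.of_forall fun n => dist_nonneg) hbdd
  -- a minimizing sequence exists
  have hex : ∃ y : ℕ → X, IsMinimizingSeq f t x (Q t x) y := by
    have h : ∀ n : ℕ, ∃ z : X, hopfLaxF f t x z < Q t x + 1 / (n + 1) := by
      intro n
      have hlt : Q t x < Q t x + 1 / ((n : ℝ) + 1) := by
        have : (0:ℝ) < 1 / ((n : ℝ) + 1) := by positivity
        linarith
      obtain ⟨w, ⟨z, rfl⟩, _, hw2⟩ := hQt.exists_between hlt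
      exact ⟨z, hw2⟩
    choose y hy using h
    refine ⟨y, ?_⟩
    unfold IsMinimizingSeq
    have h1 : ∀ n, Q t x ≤ hopfLaxF f t x (y n) := fun n => hQt.1 ⟨y n, rfl⟩
    have h2 : Tendsto (fun n : ℕ => Q t x + 1 / ((n : ℝ) + 1)) atTop (𝓝 (Q t x)) := by
      simpa using (tendsto_const_nhds : Tendsto (fun _ : ℕ => Q t x) atTop (𝓝 (Q t x))).add tendsto_one_div_add_atTop_nhds_zero_nat
    exact tendsto_of_tendsto_of_tendsto_of_le_of_le tendsto_const_nhds h2 h1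
      fun n => (hy n).le
  obtain ⟨y₀, hy₀⟩ := hex
  have hmem : (atTop.limsup fun n => dist x (y₀ n)) ∈
      {L : ℝ | ∃ y : ℕ → X, IsMinimizingSeq f t x (Q t x) y ∧
        L = atTop.limsup fun n => dist x (y n)} := ⟨y₀, hy₀, rfl⟩
  have hDp0 : 0 ≤ Dp := le_trans (key y₀ hy₀).2 (hDp.1 hmem)
  have hDpB : Dp ≤ B := by
    apply hDp.2
    rintro L ⟨y, hy, rfl⟩
    exact (key y hy).1
  have hsq : B ^ 2 = A := Real.sq_sqrt hA0
  have hDp2 : Dp ^ 2 ≤ A := by nlinarith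
  have hfin : Dp ^ 2 * c ≤ Q t x - Q s x := by
    have : A * c = Q t x - Q s x := by
      rw [hA]; field_simp
    nlinarith
  have hcdef : (1:ℝ) / s - 1 / t = -(2 * c) := by rw [hc]; ring
  have e2 : Dp ^ 2 / 2 * (1 / s - 1 / t) = -(Dp ^ 2 * c) := by rw [hcdef]; ring
  rw [e2]
  linarith
end

section
/- With Q_t f the Hopf-Lax semigroup on a metric space, the functions D⁺ and D⁻ satisfy D⁺(x,t) ≤ D⁻(x,s) for all 0 < t < s < t_*(x); consequently t ↦ D⁺(x,t) and t ↦ D⁻(x,t) are nondecreasing on (0, t_*(x)) and coincide except for at most countably many t. -/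
open Filter Topology

/-- Algebraic identity `F(t,x,w) - F(s,x,w) = (1/(2t) - 1/(2s)) d(x,w)²`. -/
lemma hopfLaxF_sub {X : Type*} [MetricSpace X] (f : X → ℝ) {t s : ℝ} (ht : t ≠ 0) (hs : s ≠ 0)
    (x w : X) :
    hopfLaxF f t x w - hopfLaxF f s x w = (1 / (2 * t) - 1 / (2 * s)) * dist x w ^ 2 := by
  unfold hopfLaxF
  field_simp
  ring

/-- A minimizing sequence at time `t` has bounded distances from `x`,
provided `F(u,x,·)` is bounded below for some `u > t`. -/
lemma bdd_of_min {X : Type*} [MetricSpace X] (f : X → ℝ) {Qt Qu : ℝ} (x : X) {t u : ℝ}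
    (ht : 0 < t) (htu : t < u)
    (hQu : IsGLB (Set.range (hopfLaxF f u x)) Qu)
    {y : ℕ → X} (hy : Tendsto (fun n => hopfLaxF f t x (y n)) atTop (𝓝 Qt)) :
    IsBoundedUnder (· ≤ ·) atTop (fun n => dist x (y n)) := by
  have hu : 0 < u := ht.trans htu
  set c : ℝ := 1 / (2 * t) - 1 / (2 * u) with hc_def
  have hc : 0 < c := by
    have : 1 / (2 * u) < 1 / (2 * t) := by
      apply one_div_lt_one_div_of_lt <;> linarith
    simpa [hc_def] using sub_pos.mpr this
  refine ⟨Real.sqrt ((Qt + 1 - Qu) / c), ?_⟩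
  have hev : ∀ᶠ n in atTop, hopfLaxF f t x (y n) < Qt + 1 :=
    hy (Iio_mem_nhds (by linarith))
  rw [eventually_map]
  filter_upwards [hev] with n hn
  have h1 : Qu ≤ hopfLaxF f u x (y n) := hQu.1 ⟨y n, rfl⟩
  have h2 := hopfLaxF_sub f ht.ne' hu.ne' x (y n)
  have hsq : dist x (y n) ^ 2 ≤ (Qt + 1 - Qu) / c := by
    rw [le_div_iff₀ hc]
    rw [← hc_def] at h2
    linarith
  calc dist x (y n) = Real.sqrt (dist x (y n) ^ 2) := by
        rw [Real.sqrt_sq dist_nonneg]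
    _ ≤ Real.sqrt ((Qt + 1 - Qu) / c) := Real.sqrt_le_sqrt hsq

/-- Key inequality: limsup of distances of a minimizing sequence at `t` is at most
the liminf of distances of a minimizing sequence at `s > t`. -/
lemma key_ineq {X : Type*} [MetricSpace X] (f : X → ℝ) {Qt Qs : ℝ} (x : X) {t s : ℝ}
    (ht : 0 < t) (hts : t < s)
    (hQt : IsGLB (Set.range (hopfLaxF f t x)) Qt)
    (hQs : IsGLB (Set.range (hopfLaxF f s x)) Qs)
    {y z : ℕ → X}
    (hy : Tendsto (fun n => hopfLaxF f t x (y n)) atTop (𝓝 Qt))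
    (hz : Tendsto (fun n => hopfLaxF f s x (z n)) atTop (𝓝 Qs))
    (hbz : IsBoundedUnder (· ≤ ·) atTop (fun n => dist x (z n))) :
    atTop.limsup (fun n => dist x (y n)) ≤ atTop.liminf (fun n => dist x (z n)) := by
  have hs : 0 < s := ht.trans hts
  set a : ℕ → ℝ := fun n => dist x (y n) with ha_def
  set b : ℕ → ℝ := fun n => dist x (z n) with hb_def
  set B : ℝ := atTop.liminf b with hB_def
  set c : ℝ := 1 / (2 * t) - 1 / (2 * s) with hc_def
  have hc : 0 < c := by
    have : 1 / (2 * s) < 1 / (2 * t) := by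
      apply one_div_lt_one_div_of_lt <;> linarith
    simpa [hc_def] using sub_pos.mpr this
  clear_value c
  have hloa : atTop.IsBoundedUnder (· ≥ ·) a :=
    isBoundedUnder_of ⟨0, fun n => dist_nonneg⟩
  have hcoa : atTop.IsCoboundedUnder (· ≤ ·) a := hloa.isCoboundedUnder_le
  have hcob : atTop.IsCoboundedUnder (· ≥ ·) b := hbz.isCoboundedUnder_ge
  have hB0 : 0 ≤ B :=
    le_liminf_of_le hcob (Eventually.of_forall fun n => dist_nonneg)
  have hkey : ∀ e : ℝ, 0 < e → atTop.limsup a ≤ B + e := by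
    intro e he
    set δ : ℝ := min (e / 2) (e ^ 2 / 16) with hδ_def
    have hδ : 0 < δ := lt_min (by linarith) (by positivity)
    have hδ1 : δ ≤ e / 2 := min_le_left _ _
    have hδ3 : δ ≤ e ^ 2 / 16 := min_le_right _ _
    have hδ2 : Real.sqrt δ ≤ e / 4 := by
      have : Real.sqrt δ ≤ Real.sqrt (e ^ 2 / 16) := Real.sqrt_le_sqrt (min_le_right _ _)
      have h4 : Real.sqrt (e ^ 2 / 16) = e / 4 := by
        rw [show e ^ 2 / 16 = (e / 4) ^ 2 by ring, Real.sqrt_sq (by linarith)]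
      linarith
    clear_value δ
    -- pick a good index m for z
    have hcδ : 0 < c * δ := mul_pos hc hδ
    have hfreq : ∃ᶠ m in atTop, b m < B + δ :=
      frequently_lt_of_liminf_lt hcob (lt_add_of_pos_right _ hδ)
    have hevz : ∀ᶠ m in atTop, hopfLaxF f s x (z m) < Qs + c * δ / 2 :=
      hz (Iio_mem_nhds (by linarith))
    obtain ⟨m, hm1, hm2⟩ := (hfreq.and_eventually hevz).exists
    have hevy : ∀ᶠ n in atTop, hopfLaxF f t x (y n) < Qt + c * δ / 2 :=
      hy (Iio_mem_nhds (by linarith))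
    refine limsup_le_of_le hcoa ?_
    filter_upwards [hevy] with n hn
    have h1 : Qt ≤ hopfLaxF f t x (z m) := hQt.1 ⟨z m, rfl⟩
    have h2 : Qs ≤ hopfLaxF f s x (y n) := hQs.1 ⟨y n, rfl⟩
    have hidy := hopfLaxF_sub f ht.ne' hs.ne' x (y n)
    have hidz := hopfLaxF_sub f ht.ne' hs.ne' x (z m)
    rw [← hc_def] at hidy hidz
    have hsq : a n ^ 2 ≤ δ + b m ^ 2 := by
      have h3 : c * a n ^ 2 ≤ c * δ + c * b m ^ 2 := by
        have hay : c * a n ^ 2 = hopfLaxF f t x (y n) - hopfLaxF f s x (y n) := by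
          rw [hidy]
        have hbz' : c * b m ^ 2 = hopfLaxF f t x (z m) - hopfLaxF f s x (z m) := by
          rw [hidz]
        linarith
      nlinarith [h3, hc]
    have hbm0 : 0 ≤ b m := dist_nonneg
    have hbm : b m ^ 2 ≤ (B + δ) ^ 2 := by nlinarith
    have hr : a n ^ 2 ≤ (B + δ + Real.sqrt δ) ^ 2 := by
      have hsd : Real.sqrt δ ^ 2 = δ := Real.sq_sqrt hδ.le
      have hsd0 : 0 ≤ Real.sqrt δ := Real.sqrt_nonneg δ
      nlinarith
    have han : a n ≤ B + δ + Real.sqrt δ :=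
      le_of_pow_le_pow_left₀ two_ne_zero (by positivity) hr
    linarith
  by_contra h
  push_neg at h
  have := hkey ((atTop.limsup a - B) / 2) (by linarith)
  linarith

/-- Monotonicity of `D⁺` and `D⁻`: on `(0,T)` (with `T = t_*(x)`, encoded by the requirement
that `Q t x` is a real greatest lower bound of `F(t,x,·)` for all `t ∈ (0,T)`) we have
`D⁺(x,t) ≤ D⁻(x,s)` for `t < s`; consequently both functions are nondecreasing on `(0,T)`
and coincide there with at most countably many exceptions. -/
theorem hopfLax_D_monotone {X : Type*} [MetricSpace X] (f : X → ℝ)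
    (Q : ℝ → X → ℝ) (x : X) (T : ℝ)
    (hQ : ∀ t ∈ Set.Ioo (0 : ℝ) T, IsGLB (Set.range (hopfLaxF f t x)) (Q t x))
    (Dp Dm : ℝ → ℝ)
    (hDp : ∀ t ∈ Set.Ioo (0 : ℝ) T, IsLUB {L : ℝ | ∃ y : ℕ → X,
      IsMinimizingSeq f t x (Q t x) y ∧ L = atTop.limsup fun n => dist x (y n)} (Dp t))
    (hDm : ∀ t ∈ Set.Ioo (0 : ℝ) T, IsGLB {L : ℝ | ∃ y : ℕ → X,
      IsMinimizingSeq f t x (Q t x) y ∧ L = atTop.liminf fun n => dist x (y n)} (Dm t)) :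
    (∀ t ∈ Set.Ioo (0 : ℝ) T, ∀ s ∈ Set.Ioo (0 : ℝ) T, t < s → Dp t ≤ Dm s) ∧
    MonotoneOn Dp (Set.Ioo (0 : ℝ) T) ∧ MonotoneOn Dm (Set.Ioo (0 : ℝ) T) ∧
    Set.Countable {t ∈ Set.Ioo (0 : ℝ) T | Dp t ≠ Dm t} := by
  -- boundedness of any minimizing sequence at any `t ∈ (0,T)`
  have hbdd : ∀ t ∈ Set.Ioo (0 : ℝ) T, ∀ {y : ℕ → X}, IsMinimizingSeq f t x (Q t x) y →
      IsBoundedUnder (· ≤ ·) atTop (fun n => dist x (y n)) := by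
    intro t ht y hy
    have hu : (t + T) / 2 ∈ Set.Ioo (0 : ℝ) T := ⟨by linarith [ht.1, ht.2], by linarith [ht.2]⟩
    exact bdd_of_min f x ht.1 (by linarith [ht.2]) (hQ _ hu) hy
  -- main inequality Dp t ≤ Dm s for t < s
  have hmain : ∀ t ∈ Set.Ioo (0 : ℝ) T, ∀ s ∈ Set.Ioo (0 : ℝ) T, t < s → Dp t ≤ Dm s := by
    intro t ht s hs hts
    refine (hDp t ht).2 ?_
    rintro L ⟨y, hy, rfl⟩
    refine (hDm s hs).2 ?_
    rintro M ⟨z, hz, rfl⟩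
    exact key_ineq f x ht.1 hts (hQ t ht) (hQ s hs) hy hz (hbdd s hs hz)
  -- Dm t ≤ Dp t on (0,T)
  have hMP : ∀ t ∈ Set.Ioo (0 : ℝ) T, Dm t ≤ Dp t := by
    intro t ht
    have hne : {L : ℝ | ∃ y : ℕ → X,
        IsMinimizingSeq f t x (Q t x) y ∧ L = atTop.limsup fun n => dist x (y n)}.Nonempty := by
      by_contra hemp
      rw [Set.not_nonempty_iff_eq_empty] at hemp
      have h1 : Dp t ≤ Dp t - 1 :=
        (hDp t ht).2 (by rw [hemp]; exact fun z hz => hz.elim)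
      linarith
    obtain ⟨L, y, hy, rfl⟩ := hne
    have hb := hbdd t ht hy
    have hlow : IsBoundedUnder (· ≥ ·) atTop (fun n => dist x (y n)) :=
      isBoundedUnder_of ⟨0, fun n => dist_nonneg⟩
    calc Dm t ≤ atTop.liminf fun n => dist x (y n) := (hDm t ht).1 ⟨y, hy, rfl⟩
      _ ≤ atTop.limsup fun n => dist x (y n) := liminf_le_limsup hb hlow
      _ ≤ Dp t := (hDp t ht).1 ⟨y, hy, rfl⟩
  have hmono_p : MonotoneOn Dp (Set.Ioo (0 : ℝ) T) := by
    intro t ht s hs hts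
    rcases eq_or_lt_of_le hts with rfl | h
    · exact le_rfl
    · exact (hmain t ht s hs h).trans (hMP s hs)
  have hmono_m : MonotoneOn Dm (Set.Ioo (0 : ℝ) T) := by
    intro t ht s hs hts
    rcases eq_or_lt_of_le hts with rfl | h
    · exact le_rfl
    · exact (hMP t ht).trans (hmain t ht s hs h)
  refine ⟨hmain, hmono_p, hmono_m, ?_⟩
  have hpair : ∀ t ∈ Set.Ioo (0 : ℝ) T, ∀ s ∈ Set.Ioo (0 : ℝ) T, t < s →
      Disjoint (Set.Ioo (Dm t) (Dp t)) (Set.Ioo (Dm s) (Dp s)) := by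
    intro t ht s hs h
    have h1 : Dp t ≤ Dm s := hmain t ht s hs h
    rw [Set.disjoint_left]
    rintro u ⟨_, hu2⟩ ⟨hu3, _⟩
    linarith
  have hdisj : Set.PairwiseDisjoint {t ∈ Set.Ioo (0 : ℝ) T | Dp t ≠ Dm t}
      (fun t => Set.Ioo (Dm t) (Dp t)) := by
    intro t ht s hs htS
    rcases lt_or_gt_of_ne htS with h | h
    · exact hpair t ht.1 s hs.1 h
    · exact (hpair s hs.1 t ht.1 h).symm
  refine hdisj.countable_of_isOpen (fun t _ => isOpen_Ioo) ?_
  rintro t ⟨ht, hne⟩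
  exact Set.nonempty_Ioo.mpr (lt_of_le_of_ne (hMP t ht) (Ne.symm hne))
end

section
/- If (X,d) is a length metric space, then for every x and t ∈ (0,t_*(x)) the slope of the Hopf-Lax function satisfies |∇⁻ Q_t f|(x) = |∇ Q_t f|(x) = D⁺(x,t)/t, and hence the right time derivative satisfies d⁺/dt Q_t f(x) + |∇ Q_t f|²(x)/2 = 0. -/
open Filter Topology

/-- The descending slope `|∇⁻g|(x) = limsup_{y→x} (g(y)-g(x))⁻/d(y,x)` (set to `0` at
isolated points). -/
noncomputable def descSlope {X : Type*} [MetricSpace X] (g : X → ℝ) (x : X) : EReal :=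
  max 0 (Filter.limsup (fun y => ((max (g x - g y) 0 / dist y x : ℝ) : EReal))
    (nhdsWithin x {x}ᶜ))

/-- The local Lipschitz constant (slope) `|∇g|(x) = limsup_{y→x} |g(y)-g(x)|/d(y,x)`
(set to `0` at isolated points). -/
noncomputable def locSlope {X : Type*} [MetricSpace X] (g : X → ℝ) (x : X) : EReal :=
  max 0 (Filter.limsup (fun y => ((|g y - g x| / dist y x : ℝ) : EReal))
    (nhdsWithin x {x}ᶜ))

lemma hlhj_B {X : Type*} [MetricSpace X] (f : X → ℝ) (Q : ℝ → X → ℝ) (T : ℝ)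
    (hQ : ∀ r ∈ Set.Ioo (0 : ℝ) T, ∀ z : X, IsGLB (Set.range (hopfLaxF f r z)) (Q r z))
    (x : X) (t : ℝ) (ht : 0 < t) (htT : t < T) (K : ℝ) :
    ∃ M : ℝ, 1 ≤ M ∧ ∀ s, t ≤ s → s ≤ (3*t+T)/4 → ∀ z : X, dist z x ≤ 1 → ∀ y,
      hopfLaxF f s z y ≤ Q t x + K → dist x y ≤ M := by
  set t' : ℝ := (t+T)/2 with ht'def
  have ht'1 : t < t' := by simp only [ht'def]; linarith
  have ht'2 : t' < T := by simp only [ht'def]; linarith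
  have ht'0 : 0 < t' := lt_trans ht ht'1
  set s₀ : ℝ := (3*t+T)/4 with hs₀def
  have hs₀1 : t < s₀ := by simp only [hs₀def]; linarith
  have hs₀2 : s₀ < t' := by simp only [hs₀def, ht'def]; linarith
  have hs₀0 : 0 < s₀ := lt_trans ht hs₀1
  set c : ℝ := 1/(2*s₀) - 1/(2*t') with hcdef
  have hc : 0 < c := by
    simp only [hcdef]
    have : 1/(2*t') < 1/(2*s₀) := by
      apply one_div_lt_one_div_of_lt <;> linarith
    linarith
  set R : ℝ := Q t x + K - Q t' x with hRdef
  set A : ℝ := max R 0 with hAdef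
  have hA0 : 0 ≤ A := le_max_right _ _
  refine ⟨max 1 ((A + 1/s₀ + 1)/c), le_max_left _ _, fun s hts hss₀ z hz y hy => ?_⟩
  by_contra hcon
  push_neg at hcon
  set d : ℝ := dist x y with hddef
  have hd1 : 1 ≤ d := le_trans (le_max_left _ _) hcon.le
  have hdM : (A + 1/s₀ + 1)/c < d := lt_of_le_of_lt (le_max_right _ _) hcon
  have hs0 : 0 < s := lt_of_lt_of_le ht hts
  -- Q t' x ≤ f y + d^2/(2 t')
  have e1 : Q t' x ≤ f y + d^2/(2*t') := by
    have := (hQ t' ⟨ht'0, ht'2⟩ x).1 ⟨y, rfl⟩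
    simpa [hopfLaxF, ← hddef] using this
  -- f y bound
  have e2 : f y ≤ Q t x + K - dist z y^2/(2*s) := by
    have : f y + dist z y^2/(2*s) ≤ Q t x + K := by simpa [hopfLaxF] using hy
    linarith
  have hzy : d - 1 ≤ dist z y := by
    have h3 : dist x y ≤ dist x z + dist z y := dist_triangle x z y
    have h4 : dist x z ≤ 1 := by rwa [dist_comm]
    simp only [hddef]; linarith
  have e3 : (d-1)^2/(2*s₀) ≤ dist z y^2/(2*s) := by
    apply div_le_div₀ (sq_nonneg _) _ (by linarith) (by linarith)
    have : 0 ≤ d - 1 := by linarith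
    nlinarith [dist_nonneg (x := z) (y := y)]
  have key : c*d^2 - d/s₀ ≤ A := by
    have heq : (d-1)^2/(2*s₀) - d^2/(2*t') = c*d^2 - d/s₀ + 1/(2*s₀) := by
      simp only [hcdef]; field_simp; ring
    have : (d-1)^2/(2*s₀) - d^2/(2*t') ≤ R := by linarith
    have h5 : R ≤ A := le_max_left _ _
    have h6 : 0 < 1/(2*s₀) := by positivity
    linarith
  -- contradiction
  have hcd : A + 1/s₀ + 1 < c*d := by
    rw [div_lt_iff₀ hc] at hdM; linarith [mul_comm c d]
  have hd0 : 0 < d := by linarith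
  have h7 : (A + 1/s₀ + 1)*d < c*d*d := by
    exact mul_lt_mul_of_pos_right hcd hd0
  have h8 : A + d/s₀ + d ≤ (A + 1/s₀ + 1)*d := by
    have h9 : A*1 ≤ A*d := mul_le_mul_of_nonneg_left hd1 hA0
    have h10 : (A + 1/s₀ + 1)*d = A*d + d/s₀ + d := by ring
    linarith
  have h11 : c*d*d = c*d^2 := by ring
  linarith

lemma hlhj_ex {X : Type*} [MetricSpace X] (f : X → ℝ) (Q : ℝ → X → ℝ) (T : ℝ)
    (hQ : ∀ r ∈ Set.Ioo (0 : ℝ) T, ∀ z : X, IsGLB (Set.range (hopfLaxF f r z)) (Q r z))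
    (r : ℝ) (hr : r ∈ Set.Ioo (0:ℝ) T) (z : X) (σ : ℝ) (hσ : 0 < σ) :
    ∃ y, hopfLaxF f r z y ≤ Q r z + σ := by
  obtain ⟨c, hc, -, hc2⟩ := (hQ r hr z).exists_between (lt_add_of_pos_right _ hσ)
  obtain ⟨y, rfl⟩ := hc
  exact ⟨y, hc2.le⟩

lemma hlhj_seq {X : Type*} [MetricSpace X] (f : X → ℝ) (Q : ℝ → X → ℝ) (T : ℝ)
    (hQ : ∀ r ∈ Set.Ioo (0 : ℝ) T, ∀ z : X, IsGLB (Set.range (hopfLaxF f r z)) (Q r z))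
    (x : X) (t : ℝ) (ht : t ∈ Set.Ioo (0:ℝ) T) (v : ℕ → X)
    (hv : ∀ n : ℕ, hopfLaxF f t x (v n) ≤ Q t x + 1/(n+1)) :
    IsMinimizingSeq f t x (Q t x) v := by
  have hlow : ∀ n : ℕ, Q t x ≤ hopfLaxF f t x (v n) := fun n => (hQ t ht x).1 ⟨v n, rfl⟩
  have h1 : Tendsto (fun n : ℕ => Q t x + 1/(n+1 : ℝ)) atTop (𝓝 (Q t x)) := by
    have : Tendsto (fun n : ℕ => 1 / ((n : ℝ) + 1)) atTop (𝓝 0) := tendsto_one_div_add_atTop_nhds_zero_nat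
    have h2 := Tendsto.add (tendsto_const_nhds (α := ℕ) (f := atTop) (x := Q t x)) this
    simpa using h2
  exact tendsto_of_tendsto_of_tendsto_of_le_of_le tendsto_const_nhds h1 hlow hv

lemma hlhj_A {X : Type*} [MetricSpace X] (f : X → ℝ) (Q : ℝ → X → ℝ) (T : ℝ)
    (hQ : ∀ r ∈ Set.Ioo (0 : ℝ) T, ∀ z : X, IsGLB (Set.range (hopfLaxF f r z)) (Q r z))
    (x : X) (t : ℝ) (ht : 0 < t) (htT : t < T) (Dp : ℝ)
    (hDp : IsLUB {L : ℝ | ∃ y : ℕ → X, IsMinimizingSeq f t x (Q t x) y ∧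
      L = atTop.limsup fun n => dist x (y n)} Dp)
    (η : ℝ) (hη : 0 < η) :
    ∃ δ > 0, ∀ y, hopfLaxF f t x y ≤ Q t x + δ → dist x y ≤ Dp + η := by
  obtain ⟨M, hM1, hM⟩ := hlhj_B f Q T hQ x t ht htT 1
  by_contra hcon
  push_neg at hcon
  have hsel : ∀ n : ℕ, ∃ y, hopfLaxF f t x y ≤ Q t x + 1/(n+1) ∧ Dp + η < dist x y := by
    intro n
    obtain ⟨y, hy1, hy2⟩ := hcon (1/(n+1)) (by positivity)
    exact ⟨y, hy1, hy2⟩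
  choose v hv1 hv2 using hsel
  have hmin : IsMinimizingSeq f t x (Q t x) v := hlhj_seq f Q T hQ x t ⟨ht, htT⟩ v hv1
  have hmem : (atTop.limsup fun n => dist x (v n)) ∈ {L : ℝ | ∃ y : ℕ → X,
      IsMinimizingSeq f t x (Q t x) y ∧ L = atTop.limsup fun n => dist x (y n)} :=
    ⟨v, hmin, rfl⟩
  have hle : (atTop.limsup fun n => dist x (v n)) ≤ Dp := hDp.1 hmem
  have hbdd : IsBoundedUnder (· ≤ ·) atTop (fun n => dist x (v n)) := by
    refine isBoundedUnder_of ⟨M, fun n => ?_⟩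
    refine hM t le_rfl (by linarith) x (by simp) (v n) ?_
    refine le_trans (hv1 n) ?_
    have : 1/((n:ℝ)+1) ≤ 1 := by
      rw [div_le_one (by positivity)]; linarith [Nat.cast_nonneg (α := ℝ) n]
    linarith
  have hge : Dp + η ≤ atTop.limsup fun n => dist x (v n) :=
    le_limsup_of_frequently_le (Frequently.of_forall (fun n => (hv2 n).le)) hbdd
  linarith

lemma hlhj_Dp0 {X : Type*} [MetricSpace X] (f : X → ℝ) (Q : ℝ → X → ℝ) (T : ℝ)
    (hQ : ∀ r ∈ Set.Ioo (0 : ℝ) T, ∀ z : X, IsGLB (Set.range (hopfLaxF f r z)) (Q r z))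
    (x : X) (t : ℝ) (ht : 0 < t) (htT : t < T) (Dp : ℝ)
    (hDp : IsLUB {L : ℝ | ∃ y : ℕ → X, IsMinimizingSeq f t x (Q t x) y ∧
      L = atTop.limsup fun n => dist x (y n)} Dp) : 0 ≤ Dp := by
  obtain ⟨M, hM1, hM⟩ := hlhj_B f Q T hQ x t ht htT 1
  have hsel : ∀ n : ℕ, ∃ y, hopfLaxF f t x y ≤ Q t x + 1/(n+1) :=
    fun n => hlhj_ex f Q T hQ t ⟨ht, htT⟩ x _ (by positivity)
  choose v hv using hsel
  have hmin := hlhj_seq f Q T hQ x t ⟨ht, htT⟩ v hv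
  have hbdd : IsBoundedUnder (· ≤ ·) atTop (fun n => dist x (v n)) := by
    refine isBoundedUnder_of ⟨M, fun n => ?_⟩
    refine hM t le_rfl (by linarith) x (by simp) (v n) ?_
    refine le_trans (hv n) ?_
    have : 1/((n:ℝ)+1) ≤ 1 := by
      rw [div_le_one (by positivity)]; linarith [Nat.cast_nonneg (α := ℝ) n]
    linarith
  have h0 : (0:ℝ) ≤ atTop.limsup fun n => dist x (v n) :=
    le_limsup_of_frequently_le (Frequently.of_forall (fun n => dist_nonneg)) hbdd
  exact le_trans h0 (hDp.1 ⟨v, hmin, rfl⟩)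

lemma hlhj_freq {X : Type*} [MetricSpace X] (f : X → ℝ) (Q : ℝ → X → ℝ) (T : ℝ)
    (hQ : ∀ r ∈ Set.Ioo (0 : ℝ) T, ∀ z : X, IsGLB (Set.range (hopfLaxF f r z)) (Q r z))
    (x : X) (t : ℝ) (ht : 0 < t) (htT : t < T) (Dp : ℝ)
    (hDp : IsLUB {L : ℝ | ∃ y : ℕ → X, IsMinimizingSeq f t x (Q t x) y ∧
      L = atTop.limsup fun n => dist x (y n)} Dp)
    (η : ℝ) (hη : 0 < η) (σ : ℝ) (hσ : 0 < σ) :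
    ∃ y, hopfLaxF f t x y ≤ Q t x + σ ∧ Dp - η ≤ dist x y := by
  -- find an element of the set above Dp - η
  have hex : ∃ L ∈ {L : ℝ | ∃ y : ℕ → X, IsMinimizingSeq f t x (Q t x) y ∧
      L = atTop.limsup fun n => dist x (y n)}, Dp - η < L := by
    by_contra hcon
    push_neg at hcon
    have : Dp ≤ Dp - η := hDp.2 (fun L hL => hcon L hL)
    linarith
  obtain ⟨L, ⟨w, hw, rfl⟩, hL⟩ := hex
  have hev : ∀ᶠ n in atTop, hopfLaxF f t x (w n) ≤ Q t x + σ := by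
    filter_upwards [hw.eventually_lt_const (lt_add_of_pos_right _ hσ)] with n hn
    exact hn.le
  have hfr : ∃ᶠ n in atTop, Dp - η ≤ dist x (w n) := by
    by_contra hcon
    rw [not_frequently] at hcon
    have hev2 : ∀ᶠ n in atTop, dist x (w n) ≤ Dp - η := by
      filter_upwards [hcon] with n hn
      push_neg at hn
      exact hn.le
    have hcb : IsCoboundedUnder (· ≤ ·) atTop (fun n => dist x (w n)) :=
      isCoboundedUnder_le_of_eventually_le atTop (x := 0)
        (Eventually.of_forall fun n => dist_nonneg)
    have := limsup_le_of_le hcb hev2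
    linarith
  obtain ⟨n, hn1, hn2⟩ := (hfr.and_eventually hev).exists
  exact ⟨w n, hn2, hn1⟩

lemma hlhj_U {X : Type*} [MetricSpace X] (f : X → ℝ) (Q : ℝ → X → ℝ) (T : ℝ)
    (hQ : ∀ r ∈ Set.Ioo (0 : ℝ) T, ∀ z : X, IsGLB (Set.range (hopfLaxF f r z)) (Q r z))
    (x : X) (t : ℝ) (ht : 0 < t) (htT : t < T) (Dp : ℝ)
    (hDp : IsLUB {L : ℝ | ∃ y : ℕ → X, IsMinimizingSeq f t x (Q t x) y ∧
      L = atTop.limsup fun n => dist x (y n)} Dp)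
    (η : ℝ) (hη : 0 < η) (z : X) :
    Q t z - Q t x ≤ dist z x * (2*(Dp+η) + dist z x)/(2*t) := by
  rw [sub_le_iff_le_add]
  apply le_of_forall_pos_le_add
  intro σ hσ
  obtain ⟨δ, hδ0, hδ⟩ := hlhj_A f Q T hQ x t ht htT Dp hDp η hη
  obtain ⟨y, hy⟩ := hlhj_ex f Q T hQ t ⟨ht, htT⟩ x (min δ σ) (lt_min hδ0 hσ)
  have hdxy : dist x y ≤ Dp + η := hδ y (le_trans hy (by linarith [min_le_left δ σ]))
  have h1 : Q t z ≤ f y + dist z y^2/(2*t) := (hQ t ⟨ht, htT⟩ z).1 ⟨y, rfl⟩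
  have h2 : f y + dist x y^2/(2*t) ≤ Q t x + min δ σ := hy
  have h3 : dist z y ≤ dist z x + dist x y := dist_triangle z x y
  have h4 : dist z y^2 ≤ dist x y^2 + dist z x*(2*(Dp+η) + dist z x) := by
    nlinarith [dist_nonneg (x := z) (y := y), dist_nonneg (x := z) (y := x),
      dist_nonneg (x := x) (y := y)]
  have h5 : dist z y^2/(2*t) ≤ dist x y^2/(2*t) + dist z x*(2*(Dp+η) + dist z x)/(2*t) := by
    rw [← add_div]
    exact div_le_div_of_nonneg_right h4 (by linarith) |>.trans_eq rfl
  have h6 : min δ σ ≤ σ := min_le_right _ _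
  linarith

lemma hlhj_Dn {X : Type*} [MetricSpace X] (f : X → ℝ) (Q : ℝ → X → ℝ) (T : ℝ)
    (hQ : ∀ r ∈ Set.Ioo (0 : ℝ) T, ∀ z : X, IsGLB (Set.range (hopfLaxF f r z)) (Q r z))
    (x : X) (t : ℝ) (ht : 0 < t) (htT : t < T) (Dp : ℝ)
    (hDpnn : 0 ≤ Dp)
    (hDp : IsLUB {L : ℝ | ∃ y : ℕ → X, IsMinimizingSeq f t x (Q t x) y ∧
      L = atTop.limsup fun n => dist x (y n)} Dp)
    (η : ℝ) (hη : 0 < η) :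
    ∃ δ, 0 < δ ∧ δ ≤ 1 ∧ ∀ z, dist z x ≤ δ →
      Q t x - Q t z ≤ dist z x * (2*(Dp+η) + dist z x)/(2*t) + dist z x * η := by
  obtain ⟨M, hM1, hM⟩ := hlhj_B f Q T hQ x t ht htT ((2*Dp+3)/(2*t) + 1)
  obtain ⟨δA, hδA0, hδA⟩ := hlhj_A f Q T hQ x t ht htT Dp hDp η hη
  obtain ⟨Co, hCo⟩ : ∃ c : ℝ, c = η + (2*Dp+3)/(2*t) + (2*M+1)/(2*t) := ⟨_, rfl⟩
  have hCo0 : 0 < Co := by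
    have : 0 < (2*Dp+3)/(2*t) := by positivity
    have : 0 < (2*M+1)/(2*t) := by positivity
    rw [hCo]; linarith
  refine ⟨min 1 (min (1/(η+1)) (δA/Co)), by positivity, min_le_left _ _, fun z hz => ?_⟩
  obtain ⟨d, hd⟩ : ∃ c : ℝ, c = dist z x := ⟨_, rfl⟩
  rw [← hd] at hz ⊢
  have hd0 : 0 ≤ d := hd ▸ dist_nonneg
  rcases eq_or_lt_of_le hd0 with hdz | hdz
  · -- z = x
    have hz0 : dist z x = 0 := by rw [← hd, ← hdz]
    have hzx : z = x := dist_eq_zero.mp hz0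
    subst hzx
    rw [← hdz]
    simp
  have hd1 : d ≤ 1 := le_trans hz (min_le_left _ _)
  have hdη : d ≤ 1/(η+1) := le_trans hz (le_trans (min_le_right _ _) (min_le_left _ _))
  have hdδA : d*Co ≤ δA := by
    have h1 : d ≤ δA/Co := le_trans hz (le_trans (min_le_right _ _) (min_le_right _ _))
    rw [← le_div_iff₀ hCo0]
    exact h1
  have hσ0 : 0 < d*η := mul_pos hdz hη
  have hσ1 : d*η ≤ 1 := by
    rw [le_div_iff₀ (by positivity : (0:ℝ) < η+1)] at hdη
    nlinarith
  obtain ⟨y, hy⟩ := hlhj_ex f Q T hQ t ⟨ht, htT⟩ z (d*η) hσ0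
  -- Q t z ≤ Q t x + d*(2Dp+3)/(2t)
  have hQz : Q t z ≤ Q t x + (2*Dp+3)/(2*t)*d := by
    have := hlhj_U f Q T hQ x t ht htT Dp hDp 1 one_pos z
    have h2 : dist z x * (2*(Dp+1) + dist z x)/(2*t) ≤ (2*Dp+3)/(2*t)*d := by
      have he : (2*Dp+3)/(2*t)*d = (2*Dp+3)*d/(2*t) := by ring
      rw [he]
      apply div_le_div_of_nonneg_right _ (by linarith)
      have hzd : dist z x = d := hd.symm
      nlinarith [hzd, hd1, hd0, hDpnn]
    linarith
  -- apply B to get dist x y ≤ M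
  have hxyM : dist x y ≤ M := by
    refine hM t le_rfl (by linarith) z (hd ▸ hd1) y ?_
    have h3 : (2*Dp+3)/(2*t)*d ≤ (2*Dp+3)/(2*t) := by
      have : 0 < (2*Dp+3)/(2*t) := by positivity
      nlinarith
    linarith [hy, hQz, hσ1]
  have hy' : f y + dist z y^2/(2*t) ≤ Q t z + d*η := by
    simpa [hopfLaxF] using hy
  have htri : dist z y ≤ d + dist x y := by
    have h := dist_triangle z x y
    rw [hd]; linarith
  have htri2 : dist x y ≤ d + dist z y := by
    have h := dist_triangle x z y
    have : dist x z = d := by rw [hd, dist_comm]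
    linarith
  have hzy : dist z y ≤ M + 1 := by linarith
  have hFxy : f y + dist x y^2/(2*t) ≤ Q t x + δA := by
    have h8 : dist x y^2 - dist z y^2 ≤ d*(2*M+1) := by
      nlinarith [dist_nonneg (x := x) (y := y), dist_nonneg (x := z) (y := y)]
    have h9 : dist x y^2/(2*t) - dist z y^2/(2*t) ≤ d*(2*M+1)/(2*t) := by
      rw [← sub_div]
      exact div_le_div_of_nonneg_right h8 (by linarith)
    have h10 : d*Co = d*η + (2*Dp+3)/(2*t)*d + d*(2*M+1)/(2*t) := by
      rw [hCo]; ring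
    have h11 : f y + dist x y^2/(2*t) ≤ Q t z + d*η + d*(2*M+1)/(2*t) := by linarith
    have h12 : Q t z + d*η + d*(2*M+1)/(2*t) ≤ Q t x + d*Co := by linarith
    linarith
  have hdxy : dist x y ≤ Dp + η := hδA y hFxy
  have h7 : Q t x ≤ f y + dist x y^2/(2*t) := (hQ t ⟨ht, htT⟩ x).1 ⟨y, rfl⟩
  have h8 : dist x y^2 - dist z y^2 ≤ d*(2*(Dp+η)+d) := by
    nlinarith [dist_nonneg (x := x) (y := y), dist_nonneg (x := z) (y := y)]
  have h9 : dist x y^2/(2*t) - dist z y^2/(2*t) ≤ d*(2*(Dp+η)+d)/(2*t) := by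
    rw [← sub_div]
    exact div_le_div_of_nonneg_right h8 (by linarith)
  linarith [hy', h7]

lemma hlhj_mono {X : Type*} [MetricSpace X] (f : X → ℝ) (Q : ℝ → X → ℝ) (T : ℝ)
    (hQ : ∀ r ∈ Set.Ioo (0 : ℝ) T, ∀ z : X, IsGLB (Set.range (hopfLaxF f r z)) (Q r z))
    (x : X) (t : ℝ) (ht : 0 < t) (htT : t < T)
    (s : ℝ) (hts : t ≤ s) (hsT : s < T) : Q s x ≤ Q t x := by
  have hs0 : 0 < s := lt_of_lt_of_le ht hts
  apply (hQ t ⟨ht, htT⟩ x).2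
  rintro a ⟨y, rfl⟩
  have h1 : Q s x ≤ hopfLaxF f s x y := (hQ s ⟨hs0, hsT⟩ x).1 ⟨y, rfl⟩
  have h2 : hopfLaxF f s x y ≤ hopfLaxF f t x y := by
    simp only [hopfLaxF]
    have : dist x y^2/(2*s) ≤ dist x y^2/(2*t) :=
      div_le_div_of_nonneg_left (sq_nonneg _) (by linarith) (by linarith)
    linarith
  exact le_trans h1 h2

lemma hlhj_UB {X : Type*} [MetricSpace X] (f : X → ℝ) (Q : ℝ → X → ℝ) (T : ℝ)
    (hQ : ∀ r ∈ Set.Ioo (0 : ℝ) T, ∀ z : X, IsGLB (Set.range (hopfLaxF f r z)) (Q r z))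
    (x : X) (t : ℝ) (ht : 0 < t) (htT : t < T) (Dp : ℝ) (hDpnn : 0 ≤ Dp)
    (hDp : IsLUB {L : ℝ | ∃ y : ℕ → X, IsMinimizingSeq f t x (Q t x) y ∧
      L = atTop.limsup fun n => dist x (y n)} Dp)
    (η : ℝ) (hη : 0 < η) (s : ℝ) (hts : t < s) (hsT : s < T) :
    Q s x - Q t x ≤ (Dp^2 - 2*Dp*η) * (1/(2*s) - 1/(2*t)) := by
  have hs0 : 0 < s := lt_trans ht hts
  rw [sub_le_iff_le_add]
  apply le_of_forall_pos_le_add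
  intro σ hσ
  obtain ⟨y, hy1, hy2⟩ := hlhj_freq f Q T hQ x t ht htT Dp hDp η hη σ hσ
  have h1 : Q s x ≤ hopfLaxF f s x y := (hQ s ⟨hs0, hsT⟩ x).1 ⟨y, rfl⟩
  have h2 : hopfLaxF f s x y = hopfLaxF f t x y + dist x y^2*(1/(2*s) - 1/(2*t)) := by
    simp only [hopfLaxF]
    field_simp
    ring
  have hc : 1/(2*s) - 1/(2*t) ≤ 0 := by
    have : 1/(2*s) ≤ 1/(2*t) := by
      apply one_div_le_one_div_of_le <;> linarith
    linarith
  have h3 : dist x y^2 ≥ Dp^2 - 2*Dp*η := by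
    rcases le_or_gt Dp η with hc1 | hc1
    · nlinarith [sq_nonneg (dist x y)]
    · have h4 : 0 < Dp - η := by linarith
      nlinarith
  have h5 : dist x y^2*(1/(2*s) - 1/(2*t)) ≤ (Dp^2 - 2*Dp*η)*(1/(2*s) - 1/(2*t)) := by
    apply mul_le_mul_of_nonpos_right h3 hc
  have h6 : hopfLaxF f t x y ≤ Q t x + σ := hy1
  linarith

lemma hlhj_LB {X : Type*} [MetricSpace X] (f : X → ℝ) (Q : ℝ → X → ℝ) (T : ℝ)
    (hQ : ∀ r ∈ Set.Ioo (0 : ℝ) T, ∀ z : X, IsGLB (Set.range (hopfLaxF f r z)) (Q r z))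
    (x : X) (t : ℝ) (ht : 0 < t) (htT : t < T) (Dp : ℝ) (hDpnn : 0 ≤ Dp)
    (hDp : IsLUB {L : ℝ | ∃ y : ℕ → X, IsMinimizingSeq f t x (Q t x) y ∧
      L = atTop.limsup fun n => dist x (y n)} Dp)
    (η : ℝ) (hη : 0 < η) :
    ∃ δ > 0, ∀ s, t < s → s ≤ t + δ →
      Q t x - Q s x ≤ (Dp+η)^2 * (1/(2*t) - 1/(2*s)) := by
  obtain ⟨M, hM1, hM⟩ := hlhj_B f Q T hQ x t ht htT 1
  obtain ⟨δA, hδA0, hδA⟩ := hlhj_A f Q T hQ x t ht htT Dp hDp η hη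
  refine ⟨min ((T-t)/4) (δA*t^2/(M^2+1)), lt_min (by linarith) (by positivity), fun s hts hsδ => ?_⟩
  have hs0 : 0 < s := lt_trans ht hts
  have hss₀ : s ≤ (3*t+T)/4 := by
    have := le_trans hsδ (by linarith [min_le_left ((T-t)/4) (δA*t^2/(M^2+1))] :
      t + min ((T-t)/4) (δA*t^2/(M^2+1)) ≤ t + (T-t)/4)
    linarith
  have hsT : s < T := by linarith
  have hsδ2 : s - t ≤ δA*t^2/(M^2+1) := by
    have := min_le_right ((T-t)/4) (δA*t^2/(M^2+1))
    linarith
  rw [sub_le_iff_le_add]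
  apply le_of_forall_pos_le_add
  intro σ hσ
  obtain ⟨σ', hσ'0, hσ'1, hσ'2⟩ : ∃ σ', 0 < σ' ∧ σ' ≤ min 1 (δA/2) ∧ σ' ≤ σ :=
    ⟨min σ (min 1 (δA/2)), by positivity, min_le_right _ _, min_le_left _ _⟩
  obtain ⟨y, hy⟩ := hlhj_ex f Q T hQ s ⟨hs0, hsT⟩ x σ' hσ'0
  have hmono := hlhj_mono f Q T hQ x t ht htT s hts.le hsT
  have hσ'le1 : σ' ≤ 1 := le_trans hσ'1 (min_le_left _ _)
  have hσ'leδA : σ' ≤ δA/2 := le_trans hσ'1 (min_le_right _ _)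
  have hxyM : dist x y ≤ M := by
    refine hM s hts.le hss₀ x (by simp) y ?_
    linarith
  have hc' : 0 ≤ 1/(2*t) - 1/(2*s) := by
    have : 1/(2*s) ≤ 1/(2*t) := by
      apply one_div_le_one_div_of_le <;> linarith
    linarith
  have h2 : hopfLaxF f t x y = hopfLaxF f s x y + dist x y^2*(1/(2*t) - 1/(2*s)) := by
    simp only [hopfLaxF]
    field_simp
    ring
  -- first bound to apply A
  have hF : hopfLaxF f t x y ≤ Q t x + δA := by
    have h3 : dist x y^2*(1/(2*t) - 1/(2*s)) ≤ M^2*(1/(2*t) - 1/(2*s)) := by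
      apply mul_le_mul_of_nonneg_right _ hc'
      nlinarith [dist_nonneg (x := x) (y := y)]
    have h4 : 1/(2*t) - 1/(2*s) = (s-t)/(2*t*s) := by field_simp
    have h5 : (s-t)/(2*t*s) ≤ (s-t)/(2*t^2) := by
      apply div_le_div_of_nonneg_left (by linarith) (by positivity) (by nlinarith)
    have h6 : M^2*((s-t)/(2*t^2)) ≤ δA/2 := by
      have hu : (δA*t^2/(M^2+1))*(M^2+1) = δA*t^2 := by field_simp
      have hu0 : (0:ℝ) ≤ δA*t^2/(M^2+1) := by positivity
      have hm : M^2*(s-t) ≤ M^2*(δA*t^2/(M^2+1)) := mul_le_mul_of_nonneg_left hsδ2 (sq_nonneg M)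
      have hx : M^2*(δA*t^2/(M^2+1)) = δA*t^2 - δA*t^2/(M^2+1) := by linear_combination hu
      have he : M^2*((s-t)/(2*t^2)) = M^2*(s-t)/(2*t^2) := by ring
      rw [he, div_le_iff₀ (by positivity : (0:ℝ) < 2*t^2)]
      have he2 : δA/2*(2*t^2) = δA*t^2 := by ring
      linarith
    have h8 : M^2*((s-t)/(2*t*s)) ≤ M^2*((s-t)/(2*t^2)) :=
      mul_le_mul_of_nonneg_left h5 (sq_nonneg M)
    have h9 : dist x y^2*(1/(2*t) - 1/(2*s)) ≤ δA/2 := by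
      rw [h4] at h3 ⊢
      linarith
    linarith [hy, hmono, hσ'leδA, h2, h9]
  have hdxy : dist x y ≤ Dp + η := hδA y hF
  have hQtx : Q t x ≤ hopfLaxF f t x y := (hQ t ⟨ht, htT⟩ x).1 ⟨y, rfl⟩
  have h8 : dist x y^2*(1/(2*t) - 1/(2*s)) ≤ (Dp+η)^2*(1/(2*t) - 1/(2*s)) := by
    apply mul_le_mul_of_nonneg_right _ hc'
    nlinarith [dist_nonneg (x := x) (y := y)]
  linarith [hQtx, h2, hy, h8, hσ'2]

set_option maxHeartbeats 1000000 in
lemma hlhj_deriv {X : Type*} [MetricSpace X] (f : X → ℝ) (Q : ℝ → X → ℝ) (T : ℝ)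
    (hQ : ∀ r ∈ Set.Ioo (0 : ℝ) T, ∀ z : X, IsGLB (Set.range (hopfLaxF f r z)) (Q r z))
    (x : X) (t : ℝ) (ht : 0 < t) (htT : t < T) (Dp : ℝ) (hDpnn : 0 ≤ Dp)
    (hDp : IsLUB {L : ℝ | ∃ y : ℕ → X, IsMinimizingSeq f t x (Q t x) y ∧
      L = atTop.limsup fun n => dist x (y n)} Dp) :
    HasDerivWithinAt (fun r => Q r x) (-(Dp^2/(2*t^2))) (Set.Ici t) t := by
  rw [hasDerivWithinAt_iff_tendsto_slope]
  rw [Metric.tendsto_nhds]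
  intro ε hε
  obtain ⟨η, hη0, hη1, hη2⟩ : ∃ η : ℝ, 0 < η ∧ η ≤ 1 ∧ η*(2*Dp+2) ≤ ε*t^2/2 := by
    refine ⟨min 1 (ε*t^2/(2*(2*Dp+2))), by positivity, min_le_left _ _, ?_⟩
    have h1 : min 1 (ε*t^2/(2*(2*Dp+2))) ≤ ε*t^2/(2*(2*Dp+2)) := min_le_right _ _
    have h2 : (0:ℝ) < 2*Dp+2 := by linarith
    rw [le_div_iff₀ (by positivity : (0:ℝ) < 2*(2*Dp+2))] at h1
    nlinarith
  obtain ⟨δL, hδL0, hδL⟩ := hlhj_LB f Q T hQ x t ht htT Dp hDpnn hDp η hη0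
  obtain ⟨δ', hδ'0, hδ'L, hδ'T, hδ'e⟩ : ∃ δ' : ℝ, 0 < δ' ∧ δ' ≤ δL ∧ δ' ≤ (T-t)/2 ∧
      δ'*(Dp^2+1) ≤ ε*t^3 := by
    refine ⟨min δL (min ((T-t)/2) (ε*t^3/(Dp^2+1))), ?_, min_le_left _ _,
      le_trans (min_le_right _ _) (min_le_left _ _), ?_⟩
    · refine lt_min hδL0 (lt_min (by linarith) (by positivity))
    · have h1 : min δL (min ((T-t)/2) (ε*t^3/(Dp^2+1))) ≤ ε*t^3/(Dp^2+1) :=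
        le_trans (min_le_right _ _) (min_le_right _ _)
      rw [le_div_iff₀ (by positivity : (0:ℝ) < Dp^2+1)] at h1
      linarith
  have hball : ∀ᶠ s in 𝓝 (t:ℝ), dist s t < δ' :=
    Filter.eventually_iff_exists_mem.mpr ⟨Metric.ball t δ', Metric.ball_mem_nhds t hδ'0,
      fun s hs => hs⟩
  filter_upwards [eventually_nhdsWithin_of_eventually_nhds hball, eventually_mem_nhdsWithin]
    with s hs1 hs2
  have hst : t < s := lt_of_le_of_ne hs2.1 (Ne.symm hs2.2)
  have hs0 : 0 < s := lt_trans ht hst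
  have hsd : s - t < δ' := by
    rw [Real.dist_eq, abs_lt] at hs1
    linarith [hs1.2]
  have hsT : s < T := by linarith
  have e1 := hlhj_UB f Q T hQ x t ht htT Dp hDpnn hDp η hη0 s hst hsT
  have e2 := hδL s hst (by linarith)
  have hslope : slope (fun r => Q r x) t s = (Q s x - Q t x)/(s - t) := by
    rw [slope_def_field]
  have hst0 : (0:ℝ) < s - t := by linarith
  have h1 : (Q s x - Q t x)/(s-t) ≤ -(Dp^2)*(1/(2*s*t)) + Dp*η*(1/(s*t)) := by
    rw [div_le_iff₀ hst0]
    have he : (Dp^2-2*Dp*η)*(1/(2*s)-1/(2*t)) =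
        (-(Dp^2)*(1/(2*s*t)) + Dp*η*(1/(s*t)))*(s-t) := by
      field_simp
      ring
    linarith [e1]
  have h2 : -((Dp+η)^2*(1/(2*s*t))) ≤ (Q s x - Q t x)/(s-t) := by
    rw [le_div_iff₀ hst0]
    have he : (Dp+η)^2*(1/(2*t)-1/(2*s)) = ((Dp+η)^2*(1/(2*s*t)))*(s-t) := by
      field_simp
    linarith [e2]
  have hk1 : 1/(2*s*t) ≤ 1/(2*t^2) := by
    apply one_div_le_one_div_of_le (by positivity)
    nlinarith
  have hk1' : 1/(s*t) ≤ 1/(t^2) := by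
    apply one_div_le_one_div_of_le (by positivity)
    nlinarith
  have hk2 : 1/(2*t^2) - 1/(2*s*t) ≤ δ'/(2*t^3) := by
    have keq : 1/(2*t^2) - 1/(2*s*t) = (s-t)/(2*s*t^2) := by
      field_simp
    rw [keq]
    exact div_le_div₀ hδ'0.le hsd.le (by positivity) (by nlinarith)
  have hup2 : Dp^2*(1/(2*t^2)) - Dp^2*(1/(2*s*t)) ≤ Dp^2*(δ'/(2*t^3)) := by
    have h := mul_le_mul_of_nonneg_left hk2 (sq_nonneg Dp)
    have hid : Dp^2*(1/(2*t^2) - 1/(2*s*t)) = Dp^2*(1/(2*t^2)) - Dp^2*(1/(2*s*t)) := by ring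
    linarith
  have hup3 : Dp^2*(δ'/(2*t^3)) ≤ ε/2 := by
    have he : Dp^2*(δ'/(2*t^3)) = Dp^2*δ'/(2*t^3) := by ring
    rw [he, div_le_iff₀ (by positivity : (0:ℝ) < 2*t^3)]
    nlinarith [hδ'e, hδ'0]
  have hup4 : Dp*η*(1/(s*t)) ≤ ε/4 := by
    have hDη : Dp*η ≤ ε*t^2/4 := by nlinarith
    have hDη0 : 0 ≤ Dp*η := by positivity
    have h := mul_le_mul_of_nonneg_left hk1' hDη0
    have h2' : Dp*η*(1/(t^2)) ≤ (ε*t^2/4)*(1/(t^2)) :=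
      mul_le_mul_of_nonneg_right hDη (by positivity)
    have he : (ε*t^2/4)*(1/(t^2)) = ε/4 := by field_simp
    linarith
  have hdn1 : (Dp+η)^2*(1/(2*s*t)) ≤ (Dp+η)^2*(1/(2*t^2)) :=
    mul_le_mul_of_nonneg_left hk1 (sq_nonneg _)
  have hdn2 : (Dp+η)^2*(1/(2*t^2)) - Dp^2*(1/(2*t^2)) ≤ ε/4 := by
    have hq : (ε*t^2/2)*(1/(2*t^2)) = ε/4 := by field_simp; ring
    have hpos : (0:ℝ) < 1/(2*t^2) := by positivity
    have hm1 : 2*Dp*η + η^2 ≤ η*(2*Dp+2) := by nlinarith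
    have hm2 : (2*Dp*η + η^2)*(1/(2*t^2)) ≤ (η*(2*Dp+2))*(1/(2*t^2)) :=
      mul_le_mul_of_nonneg_right hm1 hpos.le
    have hm3 : (η*(2*Dp+2))*(1/(2*t^2)) ≤ (ε*t^2/2)*(1/(2*t^2)) :=
      mul_le_mul_of_nonneg_right hη2 hpos.le
    have hid : (Dp+η)^2*(1/(2*t^2)) - Dp^2*(1/(2*t^2)) = (2*Dp*η+η^2)*(1/(2*t^2)) := by ring
    linarith
  rw [hslope, Real.dist_eq, abs_sub_lt_iff]
  have hDeq : Dp^2/(2*t^2) = Dp^2*(1/(2*t^2)) := by ring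
  constructor
  · linarith [h1, hup2, hup3, hup4, hDeq, hε]
  · linarith [h2, hdn1, hdn2, hDeq, hε]

set_option maxHeartbeats 1000000 in
lemma hlhj_lower {X : Type*} [MetricSpace X]
    (hlen : ∀ a b : X, ∀ ε > (0 : ℝ), ∃ γ : ℝ → X, ContinuousOn γ (Set.Icc 0 1) ∧
      γ 0 = a ∧ γ 1 = b ∧ eVariationOn γ (Set.Icc 0 1) ≤ ENNReal.ofReal (dist a b + ε))
    (f : X → ℝ) (Q : ℝ → X → ℝ) (T : ℝ)
    (hQ : ∀ r ∈ Set.Ioo (0 : ℝ) T, ∀ z : X, IsGLB (Set.range (hopfLaxF f r z)) (Q r z))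
    (x : X) (t : ℝ) (ht : 0 < t) (htT : t < T) (Dp : ℝ) (hDp0 : 0 < Dp)
    (hDp : IsLUB {L : ℝ | ∃ y : ℕ → X, IsMinimizingSeq f t x (Q t x) y ∧
      L = atTop.limsup fun n => dist x (y n)} Dp)
    (ε ρ : ℝ) (hε : 0 < ε) (hρ : 0 < ρ) :
    ∃ z : X, dist z x < ρ ∧ 0 < dist z x ∧ Dp/t - ε ≤ (Q t x - Q t z)/(dist z x) := by
  obtain ⟨η₁, hη₁0, hη₁a, hη₁b⟩ : ∃ η₁ : ℝ, 0 < η₁ ∧ η₁ ≤ Dp/2 ∧ η₁ ≤ ε*t/4 :=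
    ⟨min (Dp/2) (ε*t/4), by positivity, min_le_left _ _, min_le_right _ _⟩
  obtain ⟨r, hr0, hrρ, hrD, hr1, hrb⟩ : ∃ r : ℝ, 0 < r ∧ r ≤ ρ/2 ∧ r ≤ (Dp-η₁)/2 ∧
      r ≤ 1 ∧ r*(1+2*Dp+2*t) ≤ ε*t := by
    refine ⟨min (min (ρ/2) ((Dp-η₁)/2)) (min 1 (ε*t/(1+2*Dp+2*t))), ?_,
      le_trans (min_le_left _ _) (min_le_left _ _),
      le_trans (min_le_left _ _) (min_le_right _ _),
      le_trans (min_le_right _ _) (min_le_left _ _), ?_⟩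
    · refine lt_min (lt_min (by positivity) (by nlinarith)) (lt_min one_pos (by positivity))
    · have h1 : min (min (ρ/2) ((Dp-η₁)/2)) (min 1 (ε*t/(1+2*Dp+2*t))) ≤
          ε*t/(1+2*Dp+2*t) := le_trans (min_le_right _ _) (min_le_right _ _)
      rw [le_div_iff₀ (by positivity : (0:ℝ) < 1+2*Dp+2*t)] at h1
      linarith
  obtain ⟨y, hy1, hy2⟩ := hlhj_freq f Q T hQ x t ht htT Dp hDp η₁ hη₁0 (r^2) (by positivity)
  have hdn : Dp - η₁ ≤ dist x y := hy2
  have hdn0 : 0 < dist x y := by nlinarith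
  have hrdn : r ≤ dist x y := by nlinarith
  obtain ⟨γ, hγc, hγ0, hγ1, hγv⟩ := hlen x y (r^2) (by positivity)
  have hIcc : r ∈ Set.Icc (dist x (γ 0)) (dist x (γ 1)) := by
    rw [hγ0, hγ1, dist_self]
    exact ⟨hr0.le, hrdn⟩
  have hgcont : ContinuousOn (fun u => dist x (γ u)) (Set.Icc (0:ℝ) 1) :=
    (continuous_const.dist continuous_id).comp_continuousOn hγc
  obtain ⟨u, hu, hgu⟩ := intermediate_value_Icc (by norm_num : (0:ℝ) ≤ 1) hgcont hIcc
  set z := γ u with hzdef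
  have hxz : dist x z = r := hgu
  have hsplit := eVariationOn.Icc_add_Icc γ (s := Set.univ) hu.1 hu.2 (Set.mem_univ u)
  simp only [Set.univ_inter] at hsplit
  have he1 : edist x z ≤ eVariationOn γ (Set.Icc 0 u) := by
    rw [← hγ0]
    exact eVariationOn.edist_le γ ⟨le_refl 0, hu.1⟩ ⟨hu.1, le_refl u⟩
  have he2 : edist z y ≤ eVariationOn γ (Set.Icc u 1) := by
    rw [← hγ1]
    exact eVariationOn.edist_le γ ⟨le_refl u, hu.2⟩ ⟨hu.2, le_refl 1⟩
  have hsum : edist x z + edist z y ≤ ENNReal.ofReal (dist x y + r^2) := by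
    calc edist x z + edist z y ≤ eVariationOn γ (Set.Icc 0 u) + eVariationOn γ (Set.Icc u 1) :=
          add_le_add he1 he2
      _ = eVariationOn γ (Set.Icc 0 1) := hsplit
      _ ≤ ENNReal.ofReal (dist x y + r^2) := hγv
  have hkey : dist x z + dist z y ≤ dist x y + r^2 := by
    rw [edist_dist, edist_dist, ← ENNReal.ofReal_add dist_nonneg dist_nonneg] at hsum
    exact (ENNReal.ofReal_le_ofReal_iff
      (add_nonneg dist_nonneg (sq_nonneg r))).mp hsum
  have hzy : dist z y ≤ dist x y + r^2 - r := by rw [hxz] at hkey; linarith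
  have hzy0 : (0:ℝ) ≤ dist x y + r^2 - r := by nlinarith [dist_nonneg (x := z) (y := y)]
  have hQz : Q t z ≤ f y + dist z y^2/(2*t) := (hQ t ⟨ht, htT⟩ z).1 ⟨y, rfl⟩
  have hQx : f y + dist x y^2/(2*t) ≤ Q t x + r^2 := by simpa [hopfLaxF] using hy1
  have hzy2 : dist z y^2 ≤ (dist x y + r^2 - r)^2 := by
    nlinarith [dist_nonneg (x := z) (y := y)]
  have hdiv2 : dist z y^2/(2*t) ≤ (dist x y + r^2 - r)^2/(2*t) :=
    div_le_div_of_nonneg_right hzy2 (by linarith)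
  have hmain : (dist x y^2 - (dist x y + r^2 - r)^2)/(2*t) - r^2 ≤ Q t x - Q t z := by
    have hsub : dist x y^2/(2*t) - (dist x y + r^2 - r)^2/(2*t)
        = (dist x y^2 - (dist x y + r^2 - r)^2)/(2*t) := by ring
    linarith
  refine ⟨z, by rw [dist_comm]; linarith [hxz], by rw [dist_comm, hxz]; exact hr0, ?_⟩
  rw [dist_comm, hxz]
  have hrew : Dp/t - ε = (Dp - ε*t)/t := by field_simp
  rw [hrew, div_le_div_iff₀ ht hr0]
  -- (Dp - ε*t) * r ≤ (Q t x - Q t z) * t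
  have hpoly : Dp*r - ε*r*t ≤ ((dist x y^2 - (dist x y + r^2 - r)^2)/(2*t) - r^2)*t := by
    have hexp : ((dist x y^2 - (dist x y + r^2 - r)^2)/(2*t) - r^2)*t
        = (dist x y^2 - (dist x y + r^2 - r)^2)/2 - r^2*t := by
      field_simp
    rw [hexp]
    have hid : dist x y^2 - (dist x y + r^2 - r)^2 = (r - r^2)*(2*dist x y - r + r^2) := by
      ring
    rw [hid]
    have h2a : (r - r^2)*(2*(Dp-η₁) - r) ≤ (r - r^2)*(2*dist x y - r + r^2) := by
      apply mul_le_mul_of_nonneg_left (by nlinarith) (by nlinarith)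
    have h2b : r*(2*(Dp-η₁)-r) - 2*Dp*r^2 ≤ (r - r^2)*(2*(Dp-η₁) - r) := by nlinarith
    have h2c : (r*(2*(Dp-η₁)-r) - 2*Dp*r^2)/2 ≤ ((r - r^2)*(2*dist x y - r + r^2))/2 := by
      linarith
    have hfin : Dp*r - ε*r*t ≤ (r*(2*(Dp-η₁)-r) - 2*Dp*r^2)/2 - r^2*t := by
      nlinarith [mul_le_mul_of_nonneg_right hrb hr0.le,
        mul_le_mul_of_nonneg_right hη₁b hr0.le, mul_pos (mul_pos hε ht) hr0]
    linarith
  have hQtt : ((dist x y^2 - (dist x y + r^2 - r)^2)/(2*t) - r^2)*t ≤ (Q t x - Q t z)*t :=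
    mul_le_mul_of_nonneg_right hmain ht.le
  calc (Dp - ε*t)*r = Dp*r - ε*r*t := by ring
    _ ≤ (Q t x - Q t z)*t := le_trans hpoly hQtt

lemma hlhj_ereal_le_of_forall {A : EReal} {c : ℝ}
    (H : ∀ ε : ℝ, 0 < ε → A ≤ ((c + ε : ℝ) : EReal)) : A ≤ ((c : ℝ) : EReal) := by
  by_contra hc
  push_neg at hc
  obtain ⟨b, hb1, hb2⟩ := EReal.exists_between_coe_real hc
  have hb : c < b := by exact_mod_cast hb1
  have h2 := H (b - c) (by linarith)
  rw [show c + (b - c) = b by ring] at h2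
  exact absurd (lt_of_le_of_lt h2 hb2) (lt_irrefl _)

lemma hlhj_ereal_ge_of_forall {A : EReal} {c : ℝ}
    (H : ∀ ε : ℝ, 0 < ε → ((c - ε : ℝ) : EReal) ≤ A) : ((c : ℝ) : EReal) ≤ A := by
  by_contra hc
  push_neg at hc
  obtain ⟨b, hb1, hb2⟩ := EReal.exists_between_coe_real hc
  have hb : b < c := by exact_mod_cast hb2
  have h2 := H (c - b) (by linarith)
  rw [show c - (c - b) = b by ring] at h2
  exact absurd (lt_of_lt_of_le hb1 h2) (lt_irrefl _)

set_option maxHeartbeats 1000000 in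
lemma hlhj_loc_le {X : Type*} [MetricSpace X] (f : X → ℝ) (Q : ℝ → X → ℝ) (T : ℝ)
    (hQ : ∀ r ∈ Set.Ioo (0 : ℝ) T, ∀ z : X, IsGLB (Set.range (hopfLaxF f r z)) (Q r z))
    (x : X) (t : ℝ) (ht : 0 < t) (htT : t < T) (Dp : ℝ) (hDpnn : 0 ≤ Dp)
    (hDp : IsLUB {L : ℝ | ∃ y : ℕ → X, IsMinimizingSeq f t x (Q t x) y ∧
      L = atTop.limsup fun n => dist x (y n)} Dp) :
    Filter.limsup (fun z => ((|Q t z - Q t x| / dist z x : ℝ) : EReal))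
      (nhdsWithin x {x}ᶜ) ≤ ((Dp/t : ℝ) : EReal) := by
  apply hlhj_ereal_le_of_forall
  intro ε hε
  obtain ⟨η, hη0, hη1, hη2⟩ : ∃ η:ℝ, 0 < η ∧ η ≤ ε*t/4 ∧ η ≤ ε/4 :=
    ⟨min (ε*t/4) (ε/4), by positivity, min_le_left _ _, min_le_right _ _⟩
  obtain ⟨δD, hδD0, hδD1, hδD⟩ := hlhj_Dn f Q T hQ x t ht htT Dp hDpnn hDp η hη0
  have hball : ∀ᶠ s in 𝓝 x, dist s x < min δD (ε*t) :=
    Filter.eventually_iff_exists_mem.mpr ⟨Metric.ball x (min δD (ε*t)),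
      Metric.ball_mem_nhds x (lt_min hδD0 (by positivity)), fun s hs => hs⟩
  refine limsup_le_of_le ⟨⊥, fun a _ => bot_le⟩ ?_
  filter_upwards [eventually_nhdsWithin_of_eventually_nhds hball, eventually_mem_nhdsWithin]
    with z hz1 hz2
  have hne : z ≠ x := hz2
  have hd : 0 < dist z x := dist_pos.mpr hne
  have hdδ : dist z x ≤ δD := le_of_lt (lt_of_lt_of_le hz1 (min_le_left _ _))
  have hdε : dist z x ≤ ε*t := le_of_lt (lt_of_lt_of_le hz1 (min_le_right _ _))
  have habs : |Q t z - Q t x| ≤ dist z x*(2*(Dp+η)+dist z x)/(2*t) + dist z x*η := by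
    rw [abs_sub_le_iff]
    constructor
    · have := hlhj_U f Q T hQ x t ht htT Dp hDp η hη0 z
      nlinarith [mul_nonneg (dist_nonneg (x := z) (y := x)) hη0.le]
    · exact hδD z hdδ
  rw [EReal.coe_le_coe_iff, div_le_iff₀ hd]
  have h2t : (0:ℝ) < 2*t := by linarith
  have heq : dist z x*(2*(Dp+η)+dist z x)/(2*t) + dist z x*η
      = (dist z x*(2*(Dp+η)+dist z x) + dist z x*η*(2*t))/(2*t) := by
    field_simp
  have hexp : (Dp/t + ε)*dist z x*(2*t) = 2*Dp*dist z x + 2*ε*t*dist z x := by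
    field_simp
  have hstep : (dist z x*(2*(Dp+η)+dist z x) + dist z x*η*(2*t))/(2*t)
      ≤ (Dp/t + ε)*dist z x := by
    rw [div_le_iff₀ h2t, hexp]
    have ha : η*dist z x ≤ ε*t/4*dist z x := mul_le_mul_of_nonneg_right hη1 dist_nonneg
    have hb : dist z x*dist z x ≤ ε*t*dist z x := mul_le_mul_of_nonneg_right hdε dist_nonneg
    have hc : η*dist z x ≤ ε/4*dist z x := mul_le_mul_of_nonneg_right hη2 dist_nonneg
    have hcc : t*(η*dist z x) ≤ t*(ε/4*dist z x) := mul_le_mul_of_nonneg_left hc ht.le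
    nlinarith
  linarith [habs, heq ▸ hstep]

lemma hlhj_desc_ge {X : Type*} [MetricSpace X]
    (hlen : ∀ a b : X, ∀ ε > (0 : ℝ), ∃ γ : ℝ → X, ContinuousOn γ (Set.Icc 0 1) ∧
      γ 0 = a ∧ γ 1 = b ∧ eVariationOn γ (Set.Icc 0 1) ≤ ENNReal.ofReal (dist a b + ε))
    (f : X → ℝ) (Q : ℝ → X → ℝ) (T : ℝ)
    (hQ : ∀ r ∈ Set.Ioo (0 : ℝ) T, ∀ z : X, IsGLB (Set.range (hopfLaxF f r z)) (Q r z))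
    (x : X) (t : ℝ) (ht : 0 < t) (htT : t < T) (Dp : ℝ) (hDp0 : 0 < Dp)
    (hDp : IsLUB {L : ℝ | ∃ y : ℕ → X, IsMinimizingSeq f t x (Q t x) y ∧
      L = atTop.limsup fun n => dist x (y n)} Dp) :
    ((Dp/t : ℝ) : EReal) ≤ Filter.limsup
      (fun z => ((max (Q t x - Q t z) 0 / dist z x : ℝ) : EReal)) (nhdsWithin x {x}ᶜ) := by
  apply hlhj_ereal_ge_of_forall
  intro ε hε
  refine le_limsup_of_frequently_le ?_ ⟨⊤, Eventually.of_forall fun _ => le_top⟩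
  rw [Filter.frequently_iff]
  intro U hU
  obtain ⟨ρ, hρ0, hsub⟩ := Metric.mem_nhdsWithin_iff.1 hU
  obtain ⟨z, hz1, hz2, hz3⟩ := hlhj_lower hlen f Q T hQ x t ht htT Dp hDp0 hDp ε ρ hε hρ0
  refine ⟨z, hsub ⟨Metric.mem_ball.mpr hz1, ?_⟩, ?_⟩
  · simp only [Set.mem_compl_iff, Set.mem_singleton_iff]
    exact fun h => by rw [h] at hz2; simp at hz2
  · rw [EReal.coe_le_coe_iff]
    refine le_trans hz3 (div_le_div_of_nonneg_right ?_ hz2.le)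
    exact le_max_left _ _


/-- In a length space, the Hopf-Lax formula gives solutions of the Hamilton-Jacobi
equation: `|∇⁻ Q_t f|(x) = |∇ Q_t f|(x) = D⁺(x,t)/t`, and the right time derivative
satisfies `d⁺/dt Q_t f(x) + |∇ Q_t f|²(x)/2 = 0`. The length-space property is encoded
by the existence of curves of length arbitrarily close to the distance. -/
theorem hopfLax_HJ_supersolution_length_space {X : Type*} [MetricSpace X]
    (hlen : ∀ a b : X, ∀ ε > (0 : ℝ), ∃ γ : ℝ → X, ContinuousOn γ (Set.Icc 0 1) ∧
      γ 0 = a ∧ γ 1 = b ∧ eVariationOn γ (Set.Icc 0 1) ≤ ENNReal.ofReal (dist a b + ε))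
    (f : X → ℝ) (Q : ℝ → X → ℝ) (T : ℝ)
    (hQ : ∀ r ∈ Set.Ioo (0 : ℝ) T, ∀ z : X, IsGLB (Set.range (hopfLaxF f r z)) (Q r z))
    (x : X) (t : ℝ) (htT : t ∈ Set.Ioo (0 : ℝ) T) (Dp : ℝ)
    (hDp : IsLUB {L : ℝ | ∃ y : ℕ → X, IsMinimizingSeq f t x (Q t x) y ∧
      L = atTop.limsup fun n => dist x (y n)} Dp) :
    descSlope (fun z => Q t z) x = ((Dp / t : ℝ) : EReal) ∧
    locSlope (fun z => Q t z) x = ((Dp / t : ℝ) : EReal) ∧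
    ∃ D : ℝ, HasDerivWithinAt (fun r => Q r x) D (Set.Ici t) t ∧
      (D : EReal) + (locSlope (fun z => Q t z) x) ^ 2 / 2 = 0 := by
  obtain ⟨ht0, htT'⟩ := htT
  have hDpnn := hlhj_Dp0 f Q T hQ x t ht0 htT' Dp hDp
  have hl1 := hlhj_loc_le f Q T hQ x t ht0 htT' Dp hDpnn hDp
  have hl21 : Filter.limsup (fun z => ((max (Q t x - Q t z) 0 / dist z x : ℝ) : EReal))
        (nhdsWithin x {x}ᶜ)
      ≤ Filter.limsup (fun z => ((|Q t z - Q t x| / dist z x : ℝ) : EReal))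
        (nhdsWithin x {x}ᶜ) := by
    refine limsup_le_limsup (Eventually.of_forall fun z => ?_)
      ⟨⊥, fun a _ => bot_le⟩ ⟨⊤, Eventually.of_forall fun _ => le_top⟩
    rcases eq_or_lt_of_le (dist_nonneg (x := z) (y := x)) with h | h
    · rw [EReal.coe_le_coe_iff, ← h]
      simp
    · rw [EReal.coe_le_coe_iff]
      refine div_le_div_of_nonneg_right ?_ h.le |>.trans_eq rfl
      refine max_le ?_ (abs_nonneg _)
      rw [abs_sub_comm]
      exact le_abs_self _
  have hdesc : descSlope (fun z => Q t z) x = ((Dp / t : ℝ) : EReal) ∧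
      locSlope (fun z => Q t z) x = ((Dp / t : ℝ) : EReal) := by
    rcases eq_or_lt_of_le hDpnn with hD0 | hD0
    · have hz : ((Dp/t : ℝ) : EReal) = 0 := by
        rw [← hD0, zero_div]
        exact EReal.coe_zero
      constructor
      · simp only [descSlope]
        rw [hz, max_eq_left]
        refine le_trans hl21 (le_trans hl1 (le_of_eq hz))
      · simp only [locSlope]
        rw [hz, max_eq_left]
        exact le_trans hl1 (le_of_eq hz)
    · have hge2 := hlhj_desc_ge hlen f Q T hQ x t ht0 htT' Dp hD0 hDp
      have hcoe0 : (0:EReal) ≤ ((Dp/t:ℝ):EReal) := by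
        have : (0:ℝ) ≤ Dp/t := div_nonneg hDpnn ht0.le
        exact_mod_cast this
      constructor
      · simp only [descSlope]
        rw [le_antisymm (le_trans hl21 hl1) hge2, max_eq_right hcoe0]
      · simp only [locSlope]
        rw [le_antisymm hl1 (le_trans hge2 hl21), max_eq_right hcoe0]
  refine ⟨hdesc.1, hdesc.2, -(Dp^2/(2*t^2)),
    hlhj_deriv f Q T hQ x t ht0 htT' Dp hDpnn hDp, ?_⟩
  rw [hdesc.2]
  have h1 : ((Dp/t : ℝ) : EReal) ^ 2 = (((Dp/t)^2 : ℝ) : EReal) := by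
    rw [EReal.coe_pow]
  rw [h1]
  have h2 : (2 : EReal) = ((2:ℝ) : EReal) := rfl
  rw [h2, ← EReal.coe_div, ← EReal.coe_add]
  rw [show -(Dp^2/(2*t^2)) + (Dp/t)^2/2 = 0 by field_simp; ring]
  rfl
end

section
/- For a bounded function f on a metric space, every minimizing sequence (y_n) of F(t,x,·) = f(·) + d(x,·)²/(2t) satisfies limsup_n d(x,y_n) ≤ sqrt(2t·osc(f)); i.e., D⁺(x,t) ≤ sqrt(2t·osc(f)). -/
open Filter Topology

/-- For a bounded function `f` on a metric space, every minimizing sequence `(y n)` of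
`F(t,x,·) = f(·) + d(x,·)²/(2t)` satisfies `limsup_n d(x,y_n) ≤ sqrt(2t·osc(f))`,
where `osc(f) = sup f - inf f`. -/
theorem hopfLax_minimizing_seq_dist_bound {X : Type*} [MetricSpace X] [Nonempty X]
    (f : X → ℝ) (hbdd : BddAbove (Set.range f)) (hbdd' : BddBelow (Set.range f))
    (t : ℝ) (ht : 0 < t) (x : X) (y : ℕ → X)
    (hy : Tendsto (fun n => f (y n) + dist x (y n) ^ 2 / (2 * t)) atTop
      (𝓝 (⨅ z : X, (f z + dist x z ^ 2 / (2 * t))))) :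
    atTop.limsup (fun n => dist x (y n)) ≤
      Real.sqrt (2 * t * (sSup (Set.range f) - sInf (Set.range f))) := by
  set M := sSup (Set.range f)
  set m := sInf (Set.range f)
  have hmM : m ≤ M := csInf_le_csSup (Set.range_nonempty f) hbdd' hbdd
  have hfm : ∀ z, m ≤ f z := fun z => csInf_le hbdd' ⟨z, rfl⟩
  have hfM : ∀ z, f z ≤ M := fun z => le_csSup hbdd ⟨z, rfl⟩
  set A := 2 * t * (M - m) with hA
  have hA0 : 0 ≤ A := by nlinarith
  -- inf F ≤ f x
  have hFbdd : BddBelow (Set.range fun z : X => f z + dist x z ^ 2 / (2 * t)) := by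
    refine ⟨m, ?_⟩
    rintro _ ⟨z, rfl⟩
    have : 0 ≤ dist x z ^ 2 / (2 * t) := by positivity
    have := hfm z; linarith
  have hIle : (⨅ z : X, (f z + dist x z ^ 2 / (2 * t))) ≤ f x := by
    have := ciInf_le hFbdd x
    simpa using this
  -- main estimate
  have key : ∀ ε > (0:ℝ), atTop.limsup (fun n => dist x (y n)) ≤ Real.sqrt (A + ε ^ 2) := by
    intro ε hε
    have hδ : (0:ℝ) < ε ^ 2 / (2 * t) := by positivity
    have hev : ∀ᶠ n in atTop,
        f (y n) + dist x (y n) ^ 2 / (2 * t)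
          < (⨅ z : X, (f z + dist x z ^ 2 / (2 * t))) + ε ^ 2 / (2 * t) :=
      hy.eventually_lt_const (by linarith)
    refine Filter.limsup_le_of_le
      (Filter.isCoboundedUnder_le_of_le atTop (fun n => dist_nonneg)) ?_
    filter_upwards [hev] with n hn
    have h1 : dist x (y n) ^ 2 / (2 * t) < M - m + ε ^ 2 / (2 * t) := by
      have := hfm (y n); have := hfM x; linarith
    have h2 : dist x (y n) ^ 2 ≤ A + ε ^ 2 := by
      have h2t : (0:ℝ) < 2 * t := by linarith
      rw [div_lt_iff₀ h2t] at h1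
      have hc : ε ^ 2 / (2 * t) * (2 * t) = ε ^ 2 := div_mul_cancel₀ _ (ne_of_gt h2t)
      nlinarith
    exact (Real.le_sqrt dist_nonneg (by positivity)).mpr h2
  -- pass to the limit ε → 0
  refine le_of_forall_pos_le_add fun ε hε => ?_
  refine (key ε hε).trans ?_
  have : Real.sqrt (A + ε ^ 2) ≤ Real.sqrt A + ε := by
    rw [show Real.sqrt A + ε = Real.sqrt A + ε from rfl]
    have hs := Real.sq_sqrt hA0
    have hsn := Real.sqrt_nonneg A
    nlinarith [Real.sq_sqrt (show (0:ℝ) ≤ A + ε ^ 2 by positivity),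
      Real.sqrt_nonneg (A + ε ^ 2),
      Real.sqrt_le_sqrt (show A ≤ A + ε ^ 2 by nlinarith)]
  linarith
end
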